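/- With the Whiteman generalized cyclotomic classes of order 6 modulo $n = n_1 n_2$, let $\beta$ be a primitive $n$-th root of unity in a field $K$ of characteristic $p$ with $p \nmid n$, and define $S(X) = \sum_{i \in N_1 \cup D_0 \cup D_1 \cup D_2} X^i$. Then for every $a \in N_2 = \{n_2, \dots, (n_1-1)n_2\}$, one has $S(\beta^a) = \frac{n_2-1}{2}$ in $K$. -/

import Mathlib

open Finset Polynomial

/-- The Whiteman generalized cyclotomic class `D_i` of order 6 modulo `n = n1 * n2`,
given a common primitive root `g` and the CRT element `x`. -/
def whitemanD (n1 n2 g x : ℕ) (i : ℕ) : Finset ℕ :=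
  (Finset.range ((n1 - 1) * (n2 - 1) / 6)).image (fun s => g ^ s * x ^ i % (n1 * n2))

/-- The set `{k * a : 1 ≤ k ≤ b - 1}` of nonzero multiples of `a` below `a * b`. -/
def multSet (a b : ℕ) : Finset ℕ :=
  (Finset.Icc 1 (b - 1)).image (fun k => k * a)

/-- The index set of the generator polynomial `S(x)`: `N1 ∪ D0 ∪ D1 ∪ D2`. -/
def whitemanSIdx (n1 n2 g x : ℕ) : Finset ℕ :=
  multSet n1 n2 ∪ whitemanD n1 n2 g x 0 ∪ whitemanD n1 n2 g x 1 ∪ whitemanD n1 n2 g x 2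

/-- Sum of a periodic function over a multiple of the period. -/
lemma sum_range_mul_periodic {K : Type*} [AddCommMonoid K] (F : ℕ → K) (d m : ℕ)
    (hF : ∀ s, F (s + d) = F s) :
    ∑ s ∈ Finset.range (d * m), F s = m • ∑ s ∈ Finset.range d, F s := by
  have hF' : ∀ s j, F (s + d * j) = F s := by
    intro s j
    induction j with
    | zero => simp
    | succ j ih => rw [Nat.mul_succ, ← add_assoc, hF, ih]
  induction m with
  | zero => simp
  | succ m ih =>
    rw [Nat.mul_succ, Finset.sum_range_add, ih, succ_nsmul]
    congr 1
    apply Finset.sum_congr rfl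
    intro s _
    have := hF' s m
    rwa [add_comm s (d * m)] at this

theorem S_at_beta_pow_N2
    (n1 n2 : ℕ) (hp1 : n1.Prime) (hp2 : n2.Prime) (hne : n1 ≠ n2)
    (ho1 : Odd n1) (ho2 : Odd n2)
    (hgcd : Nat.gcd (n1 - 1) (n2 - 1) = 6)
    (g x : ℕ)
    (hg1 : orderOf (g : ZMod n1) = n1 - 1)
    (hg2 : orderOf (g : ZMod n2) = n2 - 1)
    (hx1 : x % n1 = g % n1) (hx2 : x % n2 = 1 % n2)
    (K : Type*) [Field K] (hchar : ¬ (ringChar K ∣ n1 * n2))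
    (β : K) (hβ : IsPrimitiveRoot β (n1 * n2)) :
    ∀ a ∈ multSet n2 n1,
      ∑ i ∈ whitemanSIdx n1 n2 g x, (β ^ a) ^ i = (((n2 - 1) / 2 : ℕ) : K) := by
  haveI : Fact n1.Prime := ⟨hp1⟩
  haveI : Fact n2.Prime := ⟨hp2⟩
  intro a ha
  simp only [multSet, Finset.mem_image, Finset.mem_Icc] at ha
  obtain ⟨k, ⟨hk1, hk2⟩, rfl⟩ := ha
  -- basic numerics
  have hn1pos : 0 < n1 := hp1.pos
  have hn2pos : 0 < n2 := hp2.pos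
  have h2n1 : 2 ≤ n1 := hp1.two_le
  have h2n2 : 2 ≤ n2 := hp2.two_le
  have h6b : (6 : ℕ) ∣ n2 - 1 := hgcd ▸ Nat.gcd_dvd_right (n1 - 1) (n2 - 1)
  have h6a : (6 : ℕ) ∣ n1 - 1 := hgcd ▸ Nat.gcd_dvd_left (n1 - 1) (n2 - 1)
  obtain ⟨m, hm⟩ := h6b
  -- the root ζ
  set ζ : K := β ^ (k * n2) with hζdef
  have hβn : β ^ (n1 * n2) = 1 := hβ.pow_eq_one
  have hζn1 : ζ ^ n1 = 1 := by
    rw [hζdef, ← pow_mul, show k * n2 * n1 = n1 * n2 * k by ring, pow_mul, hβn, one_pow]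
  have hζn : ζ ^ (n1 * n2) = 1 := by
    rw [pow_mul, hζn1, one_pow]
  have hζne : ζ ≠ 1 := by
    apply hβ.pow_ne_one_of_pos_of_lt
    · positivity
    · calc k * n2 ≤ (n1 - 1) * n2 := Nat.mul_le_mul_right _ hk2
        _ < n1 * n2 := (Nat.mul_lt_mul_right hn2pos).mpr (by omega)
  have hgeom : ∑ u ∈ Finset.range n1, ζ ^ u = 0 := by
    rw [geom_sum_eq hζne, hζn1]
    simp
  -- ζ-power reductions
  have hpowmod : ∀ u v : ℕ, u ≡ v [MOD n1] → ζ ^ u = ζ ^ v := by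
    intro u v h
    rw [pow_eq_pow_mod u hζn1, pow_eq_pow_mod v hζn1, h]
  have hpowmodn : ∀ u : ℕ, ζ ^ (u % (n1 * n2)) = ζ ^ u := by
    intro u
    rw [← pow_eq_pow_mod u hζn]
  -- casts
  have hxg1 : (x : ZMod n1) = (g : ZMod n1) := by
    rw [← ZMod.natCast_mod x n1, ← ZMod.natCast_mod g n1, hx1]
  have hx2' : (x : ZMod n2) = 1 := by
    rw [← ZMod.natCast_mod x n2, hx2, ZMod.natCast_mod, Nat.cast_one]
  have hgne1 : (g : ZMod n1) ≠ 0 := by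
    intro h
    rw [h] at hg1
    have h1 : (0 : ZMod n1) ^ (n1 - 1) = 1 := hg1 ▸ pow_orderOf_eq_one (0 : ZMod n1)
    rw [zero_pow (by omega)] at h1
    exact zero_ne_one h1
  have hgne2 : (g : ZMod n2) ≠ 0 := by
    intro h
    rw [h] at hg2
    have h1 : (0 : ZMod n2) ^ (n2 - 1) = 1 := hg2 ▸ pow_orderOf_eq_one (0 : ZMod n2)
    rw [zero_pow (by omega)] at h1
    exact zero_ne_one h1
  -- order facts via units
  set u1 : (ZMod n1)ˣ := Units.mk0 _ hgne1 with hu1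
  set u2 : (ZMod n2)ˣ := Units.mk0 _ hgne2 with hu2
  have hou1 : orderOf u1 = n1 - 1 := by
    have : ((u1 : ZMod n1)) = (g : ZMod n1) := rfl
    rw [← hg1, ← this, orderOf_units]
  have hou2 : orderOf u2 = n2 - 1 := by
    have : ((u2 : ZMod n2)) = (g : ZMod n2) := rfl
    rw [← hg2, ← this, orderOf_units]
  have hgpow1 : ∀ s t : ℕ, (g : ZMod n1) ^ s = (g : ZMod n1) ^ t ↔ s ≡ t [MOD n1 - 1] := by
    intro s t
    rw [← hou1, ← pow_eq_pow_iff_modEq]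
    constructor
    · intro h; ext; simpa [hu1] using h
    · intro h; simpa [hu1] using congrArg Units.val h
  have hgpow2 : ∀ s t : ℕ, (g : ZMod n2) ^ s = (g : ZMod n2) ^ t ↔ s ≡ t [MOD n2 - 1] := by
    intro s t
    rw [← hou2, ← pow_eq_pow_iff_modEq]
    constructor
    · intro h; ext; simpa [hu2] using h
    · intro h; simpa [hu2] using congrArg Units.val h
  -- key modular extraction
  have key : ∀ s t i j : ℕ, g ^ s * x ^ i % (n1 * n2) = g ^ t * x ^ j % (n1 * n2) →
      (s + i) ≡ (t + j) [MOD n1 - 1] ∧ s ≡ t [MOD n2 - 1] := by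
    intro s t i j h
    have hmod : g ^ s * x ^ i ≡ g ^ t * x ^ j [MOD n1 * n2] := h
    constructor
    · have h1 : g ^ s * x ^ i ≡ g ^ t * x ^ j [MOD n1] := hmod.of_dvd ⟨n2, rfl⟩
      have h2 := (ZMod.natCast_eq_natCast_iff _ _ _).mpr h1
      push_cast at h2
      rw [hxg1, ← pow_add, ← pow_add] at h2
      exact (hgpow1 _ _).mp h2
    · have h1 : g ^ s * x ^ i ≡ g ^ t * x ^ j [MOD n2] := hmod.of_dvd ⟨n1, mul_comm n1 n2⟩
      have h2 := (ZMod.natCast_eq_natCast_iff _ _ _).mpr h1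
      push_cast at h2
      rw [hx2'] at h2
      simp only [one_pow, mul_one] at h2
      exact (hgpow2 _ _).mp h2
  -- the size of the range
  have hE : (n1 - 1) * (n2 - 1) / 6 = (n1 - 1) * m := by
    rw [hm, show (n1 - 1) * (6 * m) = 6 * ((n1 - 1) * m) by ring,
      Nat.mul_div_cancel_left _ (by norm_num)]
  have hlcm : Nat.lcm (n1 - 1) (n2 - 1) = (n1 - 1) * m := by
    have h1 := Nat.gcd_mul_lcm (n1 - 1) (n2 - 1)
    rw [hgcd] at h1
    have h2 : (n1 - 1) * (n2 - 1) = 6 * ((n1 - 1) * m) := by rw [hm]; ring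
    omega
  -- injectivity of the defining map of D i
  have hinj : ∀ i : ℕ, ∀ s ∈ Finset.range ((n1 - 1) * m), ∀ t ∈ Finset.range ((n1 - 1) * m),
      g ^ s * x ^ i % (n1 * n2) = g ^ t * x ^ i % (n1 * n2) → s = t := by
    intro i s hs t ht h
    obtain ⟨h1, h2⟩ := key s t i i h
    have h1' : s ≡ t [MOD n1 - 1] := Nat.ModEq.add_right_cancel' i h1
    have h3 : s ≡ t [MOD (n1 - 1) * m] := hlcm ▸ Nat.mod_lcm h1' h2
    simp only [Finset.mem_range] at hs ht
    have := h3.symm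
    unfold Nat.ModEq at h3
    rwa [Nat.mod_eq_of_lt hs, Nat.mod_eq_of_lt ht] at h3
  -- g^(n1-1) ≡ 1 mod n1
  have hgper : g ^ (n1 - 1) ≡ 1 [MOD n1] := by
    have h1 : (g : ZMod n1) ^ (n1 - 1) = 1 := hg1 ▸ pow_orderOf_eq_one (g : ZMod n1)
    have := (ZMod.natCast_eq_natCast_iff (g ^ (n1 - 1)) 1 n1)
    push_cast at this
    exact this.mp h1
  -- elements of D i are nonzero mod n1
  have hDnz : ∀ s i : ℕ, ¬ (n1 ∣ g ^ s * x ^ i % (n1 * n2)) := by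
    intro s i hdvd
    have h1 : ((g ^ s * x ^ i % (n1 * n2) : ℕ) : ZMod n1) = 0 := by
      exact_mod_cast (ZMod.natCast_eq_zero_iff _ _).mpr hdvd
    have h2 : ((g ^ s * x ^ i % (n1 * n2) : ℕ) : ZMod n1) = ((g ^ s * x ^ i : ℕ) : ZMod n1) :=
      (ZMod.natCast_eq_natCast_iff _ _ _).mpr
        (Nat.ModEq.of_dvd ⟨n2, rfl⟩ (Nat.mod_modEq _ _))
    rw [h2] at h1
    push_cast at h1
    rw [hxg1] at h1
    exact (mul_ne_zero (pow_ne_zero _ hgne1) (pow_ne_zero _ hgne1)) h1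
  -- sum over one period equals -1
  have hperiodsum : ∀ i : ℕ, ∑ s ∈ Finset.range (n1 - 1), ζ ^ (g ^ (s + i) % n1) = -1 := by
    intro i
    have hinj1 : ∀ s ∈ Finset.range (n1 - 1), ∀ t ∈ Finset.range (n1 - 1),
        g ^ (s + i) % n1 = g ^ (t + i) % n1 → s = t := by
      intro s hs t ht h
      have h2 : (g : ZMod n1) ^ (s + i) = (g : ZMod n1) ^ (t + i) := by
        have := (ZMod.natCast_eq_natCast_iff (g ^ (s + i)) (g ^ (t + i)) n1).mpr h
        push_cast at this
        exact this
      have h3 : s + i ≡ t + i [MOD n1 - 1] := (hgpow1 _ _).mp h2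
      have h4 : s ≡ t [MOD n1 - 1] := Nat.ModEq.add_right_cancel' i h3
      simp only [Finset.mem_range] at hs ht
      unfold Nat.ModEq at h4
      rwa [Nat.mod_eq_of_lt hs, Nat.mod_eq_of_lt ht] at h4
    have himage : (Finset.range (n1 - 1)).image (fun s => g ^ (s + i) % n1)
        = Finset.Ico 1 n1 := by
      apply Finset.eq_of_subset_of_card_le
      · intro u hu
        simp only [Finset.mem_image, Finset.mem_range] at hu
        obtain ⟨s, hs, rfl⟩ := hu
        simp only [Finset.mem_Ico]
        constructor
        · by_contra h
          push_neg at h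
          interval_cases h' : (g ^ (s + i) % n1)
          have : ((g ^ (s + i) : ℕ) : ZMod n1) = 0 := by
            rw [← ZMod.natCast_mod, h']
            simp
          push_cast at this
          exact (pow_ne_zero _ hgne1) this
        · exact Nat.mod_lt _ hn1pos
      · rw [Nat.card_Ico, Finset.card_image_of_injOn, Finset.card_range]
        intro s hs t ht h
        exact hinj1 s hs t ht h
    calc ∑ s ∈ Finset.range (n1 - 1), ζ ^ (g ^ (s + i) % n1)
        = ∑ u ∈ (Finset.range (n1 - 1)).image (fun s => g ^ (s + i) % n1), ζ ^ u := by
          rw [Finset.sum_image hinj1]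
      _ = ∑ u ∈ Finset.Ico 1 n1, ζ ^ u := by rw [himage]
      _ = -1 := by
          have hico : Finset.Ico 1 n1 = (Finset.range n1).erase 0 := by
            ext u
            simp only [Finset.mem_Ico, Finset.mem_erase, Finset.mem_range]
            omega
          rw [hico]
          have := Finset.sum_erase_add (Finset.range n1) (fun u => ζ ^ u)
            (Finset.mem_range.mpr hn1pos)
          rw [hgeom] at this
          simp only [pow_zero] at this
          exact eq_neg_of_add_eq_zero_left this
  -- sum over each D i
  have sumD : ∀ i : ℕ, ∑ d ∈ whitemanD n1 n2 g x i, ζ ^ d = -((m : K)) := by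
    intro i
    unfold whitemanD
    rw [hE, Finset.sum_image (hinj i)]
    have step : ∀ s, ζ ^ (g ^ s * x ^ i % (n1 * n2)) = ζ ^ (g ^ (s + i) % n1) := by
      intro s
      rw [hpowmodn]
      apply hpowmod
      have hxg : x ≡ g [MOD n1] := hx1
      calc g ^ s * x ^ i ≡ g ^ s * g ^ i [MOD n1] := Nat.ModEq.mul_left _ (hxg.pow i)
        _ = g ^ (s + i) := (pow_add g s i).symm
        _ ≡ g ^ (s + i) % n1 [MOD n1] := (Nat.mod_modEq _ _).symm
    simp only [step]
    have hper : ∀ s, ζ ^ (g ^ (s + (n1 - 1) + i) % n1) = ζ ^ (g ^ (s + i) % n1) := by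
      intro s
      apply hpowmod
      calc g ^ (s + (n1 - 1) + i) % n1 ≡ g ^ (s + (n1 - 1) + i) [MOD n1] := Nat.mod_modEq _ _
        _ = g ^ (s + i) * g ^ (n1 - 1) := by rw [← pow_add]; ring_nf
        _ ≡ g ^ (s + i) * 1 [MOD n1] := Nat.ModEq.mul_left _ hgper
        _ = g ^ (s + i) := mul_one _
        _ ≡ g ^ (s + i) % n1 [MOD n1] := (Nat.mod_modEq _ _).symm
    rw [sum_range_mul_periodic (fun s => ζ ^ (g ^ (s + i) % n1)) (n1 - 1) m hper,
      hperiodsum i]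
    simp
  -- sum over N1
  have sumN1 : ∑ d ∈ multSet n1 n2, ζ ^ d = ((n2 - 1 : ℕ) : K) := by
    unfold multSet
    rw [Finset.sum_image (fun s _ t _ h => Nat.eq_of_mul_eq_mul_right hn1pos h)]
    have : ∀ j ∈ Finset.Icc 1 (n2 - 1), ζ ^ (j * n1) = 1 := by
      intro j _
      rw [pow_mul', hζn1, one_pow]
    rw [Finset.sum_congr rfl this, Finset.sum_const, Nat.card_Icc]
    simp
  -- disjointness of the D's
  have hDdisj : ∀ i j : ℕ, i < 6 → j < 6 → i ≠ j →
      Disjoint (whitemanD n1 n2 g x i) (whitemanD n1 n2 g x j) := by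
    intro i j hi hj hij
    rw [Finset.disjoint_left]
    intro d hdi hdj
    simp only [whitemanD, Finset.mem_image, Finset.mem_range] at hdi hdj
    obtain ⟨s, _, hs⟩ := hdi
    obtain ⟨t, _, ht⟩ := hdj
    obtain ⟨h1, h2⟩ := key s t i j (hs.trans ht.symm)
    have h16 : s + i ≡ t + j [MOD 6] := h1.of_dvd h6a
    have h26 : s ≡ t [MOD 6] := h2.of_dvd (hm ▸ Dvd.intro m rfl)
    have h36 : t + i ≡ t + j [MOD 6] := ((h26.symm.add_right i).trans h16)
    have h46 : i ≡ j [MOD 6] := Nat.ModEq.add_left_cancel' t h36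
    unfold Nat.ModEq at h46
    rw [Nat.mod_eq_of_lt hi, Nat.mod_eq_of_lt hj] at h46
    exact hij h46
  -- disjointness of N1 from the D's
  have hN1disj : ∀ i : ℕ, Disjoint (multSet n1 n2) (whitemanD n1 n2 g x i) := by
    intro i
    rw [Finset.disjoint_left]
    intro d hdN hdD
    simp only [multSet, Finset.mem_image, Finset.mem_Icc] at hdN
    simp only [whitemanD, Finset.mem_image, Finset.mem_range] at hdD
    obtain ⟨j, _, rfl⟩ := hdN
    obtain ⟨s, _, hs⟩ := hdD
    exact hDnz s i (hs ▸ dvd_mul_left n1 j)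
  -- assemble
  have hd1 : Disjoint (multSet n1 n2) (whitemanD n1 n2 g x 0) := hN1disj 0
  have hd2 : Disjoint (multSet n1 n2 ∪ whitemanD n1 n2 g x 0) (whitemanD n1 n2 g x 1) :=
    Finset.disjoint_union_left.mpr ⟨hN1disj 1, hDdisj 0 1 (by norm_num) (by norm_num) (by norm_num)⟩
  have hd3 : Disjoint (multSet n1 n2 ∪ whitemanD n1 n2 g x 0 ∪ whitemanD n1 n2 g x 1)
      (whitemanD n1 n2 g x 2) :=
    Finset.disjoint_union_left.mpr ⟨Finset.disjoint_union_left.mpr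
      ⟨hN1disj 2, hDdisj 0 2 (by norm_num) (by norm_num) (by norm_num)⟩,
      hDdisj 1 2 (by norm_num) (by norm_num) (by norm_num)⟩
  show ∑ i ∈ whitemanSIdx n1 n2 g x, ζ ^ i = (((n2 - 1) / 2 : ℕ) : K)
  unfold whitemanSIdx
  rw [Finset.sum_union hd3, Finset.sum_union hd2, Finset.sum_union hd1,
    sumN1, sumD 0, sumD 1, sumD 2]
  rw [hm, show 6 * m / 2 = 3 * m from by omega]
  push_cast
  ring
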